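/- Let c > 1 be an integer, let a, b be integers with 0 ≤ a, b < c, let d = (1−a−b) mod c, and suppose T_{a,b,c} is a clean lattice tetrahedron. Then T_{a,b,c} is empty if and only if for every integer k with 1 ≤ k ≤ c−1, ⟨ka/c⟩ + ⟨kb/c⟩ + ⟨kd/c⟩ − k/c = 1, where ⟨x⟩ = x − ⌊x⌋ denotes the fractional part. -/

import Mathlib

/-- A point of `ℝ³` is a lattice point if all of its coordinates are integers. -/
def IsLatticePt (x : Fin 3 → ℝ) : Prop := ∀ i, ∃ m : ℤ, x i = (m : ℝ)

/-- The tetrahedron `T_{a,b,c}`: the convex hull of `(0,0,0)`, `(1,0,0)`, `(0,1,0)`, `(a,b,c)`. -/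
def Tet (a b c : ℤ) : Set (Fin 3 → ℝ) :=
  convexHull ℝ {![0,0,0], ![1,0,0], ![0,1,0], ![(a : ℝ), (b : ℝ), (c : ℝ)]}

/-- `T_{a,b,c}` is an empty lattice tetrahedron: it contains no point of `ℤ³`
other than its four vertices. -/
def TetIsEmpty (a b c : ℤ) : Prop :=
  ∀ x ∈ Tet a b c, IsLatticePt x →
    x = ![0,0,0] ∨ x = ![1,0,0] ∨ x = ![0,1,0] ∨ x = ![(a : ℝ), (b : ℝ), (c : ℝ)]

/-- `T_{a,b,c}` is a clean lattice tetrahedron: it contains no point of `ℤ³` on its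
boundary other than its four vertices. -/
def TetIsClean (a b c : ℤ) : Prop :=
  ∀ x ∈ frontier (Tet a b c), IsLatticePt x →
    x = ![0,0,0] ∨ x = ![1,0,0] ∨ x = ![0,1,0] ∨ x = ![(a : ℝ), (b : ℝ), (c : ℝ)]

lemma tet_mem_iff (a b c : ℤ) (hc : 0 < c) (x : Fin 3 → ℝ) :
    x ∈ Tet a b c ↔
      0 ≤ (c:ℝ) * x 0 - a * x 2 ∧ 0 ≤ (c:ℝ) * x 1 - b * x 2 ∧ 0 ≤ x 2 ∧
        (c:ℝ) * x 0 + c * x 1 + (1 - a - b) * x 2 ≤ c := by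
  have hc' : (0:ℝ) < c := by exact_mod_cast hc
  have lin1 : IsLinearMap ℝ (fun y : Fin 3 → ℝ => (c:ℝ) * y 0 - a * y 2) :=
    ⟨fun u v => by simp; ring, fun r u => by simp; ring⟩
  have lin2 : IsLinearMap ℝ (fun y : Fin 3 → ℝ => (c:ℝ) * y 1 - b * y 2) :=
    ⟨fun u v => by simp; ring, fun r u => by simp; ring⟩
  have lin3 : IsLinearMap ℝ (fun y : Fin 3 → ℝ => y 2) :=
    ⟨fun u v => by simp, fun r u => by simp⟩
  have lin4 : IsLinearMap ℝ (fun y : Fin 3 → ℝ => (c:ℝ) * y 0 + c * y 1 + (1 - a - b) * y 2) :=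
    ⟨fun u v => by simp; ring, fun r u => by simp; ring⟩
  constructor
  · intro hx
    have hvert : ∀ y ∈ ({![0,0,0], ![1,0,0], ![0,1,0], ![(a : ℝ), (b : ℝ), (c : ℝ)]} :
        Set (Fin 3 → ℝ)),
        0 ≤ (c:ℝ) * y 0 - a * y 2 ∧ 0 ≤ (c:ℝ) * y 1 - b * y 2 ∧ 0 ≤ y 2 ∧
          (c:ℝ) * y 0 + c * y 1 + (1 - a - b) * y 2 ≤ c := by
      rintro y hy
      simp only [Set.mem_insert_iff, Set.mem_singleton_iff] at hy
      rcases hy with rfl | rfl | rfl | rfl <;>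
        refine ⟨?_, ?_, ?_, ?_⟩ <;> norm_num [Matrix.cons_val_two, Matrix.tail_cons, Matrix.head_cons] <;> nlinarith [hc']
    refine ⟨(convexHull_min (fun y hy => (hvert y hy).1) (convex_halfSpace_ge lin1 0)) hx,
      (convexHull_min (fun y hy => (hvert y hy).2.1) (convex_halfSpace_ge lin2 0)) hx,
      (convexHull_min (fun y hy => (hvert y hy).2.2.1) (convex_halfSpace_ge lin3 0)) hx,
      (convexHull_min (fun y hy => (hvert y hy).2.2.2) (convex_halfSpace_le lin4 c)) hx⟩
  · rintro ⟨h1, h2, h3, h4⟩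
    set w : Fin 4 → ℝ := ![(c - c * x 0 - c * x 1 - (1 - a - b) * x 2) / c,
      ((c:ℝ) * x 0 - a * x 2) / c, ((c:ℝ) * x 1 - b * x 2) / c, x 2 / c] with hw
    set z : Fin 4 → (Fin 3 → ℝ) :=
      ![![0,0,0], ![1,0,0], ![0,1,0], ![(a : ℝ), (b : ℝ), (c : ℝ)]] with hz
    have hw0 : ∀ i ∈ Finset.univ, 0 ≤ w i := by
      intro i _
      fin_cases i <;> simp only [hw, Matrix.cons_val_zero, Matrix.cons_val_one,
        Matrix.head_cons, Matrix.cons_val_two, Matrix.tail_cons, Matrix.cons_val_three] <;>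
        exact div_nonneg (by linarith) hc'.le
    have hws : ∑ i ∈ Finset.univ, w i = 1 := by
      simp [hw, Fin.sum_univ_four]
      field_simp
      ring
    have hmem := Finset.centerMass_mem_convexHull (t := (Finset.univ : Finset (Fin 4)))
      (w := w) (z := z) hw0 (by rw [hws]; norm_num)
      (fun i _ => by fin_cases i <;> simp [hz])
      (s := {![0,0,0], ![1,0,0], ![0,1,0], ![(a : ℝ), (b : ℝ), (c : ℝ)]})
    have hcm : Finset.univ.centerMass w z = x := by
      rw [Finset.centerMass_eq_of_sum_1 _ _ hws]
      funext j
      fin_cases j <;> simp [hw, hz, Fin.sum_univ_four] <;> field_simp <;> ring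
    rwa [hcm] at hmem

lemma tet_closed (a b c : ℤ) : IsClosed (Tet a b c) :=
  Set.Finite.isClosed_convexHull (𝕜 := ℝ) (by
    exact (Set.finite_singleton _).insert _ |>.insert _ |>.insert _)


lemma interior_strict (a b c : ℤ) (hc : 0 < c) (x : Fin 3 → ℝ)
    (hx : x ∈ interior (Tet a b c)) :
    0 < (c:ℝ) * x 0 - a * x 2 ∧ 0 < (c:ℝ) * x 1 - b * x 2 ∧ 0 < x 2 ∧
      (c:ℝ) * x 0 + c * x 1 + (1 - a - b) * x 2 < c := by
  have hc' : (0:ℝ) < c := by exact_mod_cast hc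
  obtain ⟨ε, hε, hball⟩ := Metric.isOpen_iff.1 isOpen_interior x hx
  have hsub : Metric.ball x ε ⊆ Tet a b c := hball.trans interior_subset
  have key : ∀ i : Fin 3, ∀ t : ℝ, |t| ≤ ε / 2 → Function.update x i (x i + t) ∈ Tet a b c := by
    intro i t ht
    apply hsub
    rw [Metric.mem_ball]
    have : dist (Function.update x i (x i + t)) x ≤ ε / 2 := by
      rw [dist_pi_le_iff (by linarith)]
      intro j
      rcases eq_or_ne j i with rfl | hj
      · simp [Real.dist_eq, ht]
      · simp [Function.update_of_ne hj]
        linarith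
    linarith
  have e2 : (ε/2) > 0 := by linarith
  have habs : |(-(ε/2) : ℝ)| ≤ ε/2 := by rw [abs_neg, abs_of_pos e2]
  have habs' : |(ε/2 : ℝ)| ≤ ε/2 := by rw [abs_of_pos e2]
  refine ⟨?_, ?_, ?_, ?_⟩
  · have := (tet_mem_iff a b c hc _).1 (key 0 (-(ε/2)) habs)
    simp [Function.update_apply] at this
    -- this : 0 ≤ c * (x 0 - ε/2) - a * x 2 roughly
    nlinarith [this.1]
  · have := (tet_mem_iff a b c hc _).1 (key 1 (-(ε/2)) habs)
    simp [Function.update_apply] at this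
    nlinarith [this.2.1]
  · have := (tet_mem_iff a b c hc _).1 (key 2 (-(ε/2)) habs)
    simp [Function.update_apply] at this
    nlinarith [this.2.2.1]
  · have := (tet_mem_iff a b c hc _).1 (key 0 (ε/2) habs')
    simp [Function.update_apply] at this
    nlinarith [this.2.2.2]

lemma my_fract_eq (m c : ℤ) (hc : 0 < c) :
    Int.fract ((m:ℝ)/(c:ℝ)) = ((m % c : ℤ):ℝ)/(c:ℝ) := by
  have hc' : (0:ℝ) < c := by exact_mod_cast hc
  have hm := Int.mul_ediv_add_emod m c
  have hsplit : (m:ℝ)/c = ((m % c : ℤ):ℝ)/c + ((m / c : ℤ):ℝ) := by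
    have := congrArg (Int.cast : ℤ → ℝ) hm
    push_cast at this
    field_simp
    linarith
  rw [hsplit, Int.fract_add_intCast, Int.fract_eq_self.2 ⟨?_, ?_⟩]
  · exact div_nonneg (by exact_mod_cast Int.emod_nonneg m (by omega)) hc'.le
  · rw [div_lt_one hc']
    exact_mod_cast Int.emod_lt_of_pos m hc


lemma tet_forward (a b c d : ℤ) (hc : 1 < c) (ha : 0 ≤ a) (hac : a < c) (hb : 0 ≤ b)
    (hbc : b < c) (hd : d = (1 - a - b) % c)
    (hEmpty : ∀ x ∈ Tet a b c, IsLatticePt x →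
      x = ![0,0,0] ∨ x = ![1,0,0] ∨ x = ![0,1,0] ∨ x = ![(a : ℝ), (b : ℝ), (c : ℝ)])
    (k : ℤ) (hk1 : 1 ≤ k) (hk2 : k ≤ c - 1) :
    Int.fract ((k * a : ℤ) / (c : ℝ)) + Int.fract ((k * b : ℤ) / (c : ℝ)) +
      Int.fract ((k * d : ℤ) / (c : ℝ)) - (k : ℝ) / (c : ℝ) = 1 := by
  have hc0 : (0:ℤ) < c := by omega
  have hc' : (0:ℝ) < c := by exact_mod_cast hc0
  have h1 := Int.mul_ediv_add_emod (k*a) c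
  have h2 := Int.mul_ediv_add_emod (k*b) c
  have h3 := Int.mul_ediv_add_emod (k*d) c
  have h4 := Int.mul_ediv_add_emod (1-a-b) c
  rw [← hd] at h4
  set A := k * a % c with hA
  set B := k * b % c with hB
  set D := k * d % c with hD
  have hA0 : 0 ≤ A := Int.emod_nonneg _ (by omega)
  have hA1 : A < c := Int.emod_lt_of_pos _ hc0
  have hB0 : 0 ≤ B := Int.emod_nonneg _ (by omega)
  have hB1 : B < c := Int.emod_lt_of_pos _ hc0
  have hD0 : 0 ≤ D := Int.emod_nonneg _ (by omega)
  have hD1 : D < c := Int.emod_lt_of_pos _ hc0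
  set M : ℤ := -(k*a/c) - (k*b/c) - (k*d/c) - k*((1-a-b)/c) with hM
  have hABD : A + B + D = k + c * M := by
    rw [hM]; linear_combination h1 + h2 + h3 + k * h4
  have hM0 : 0 ≤ M := by
    by_contra hx
    push_neg at hx
    have : c * M ≤ c * (-1) := mul_le_mul_of_nonneg_left (by omega) hc0.le
    omega
  have hM2 : M ≤ 2 := by
    by_contra hx
    push_neg at hx
    have : c * 3 ≤ c * M := mul_le_mul_of_nonneg_left (by omega) hc0.le
    omega
  -- rule out M = 2
  have hMne2 : M ≠ 2 := by
    intro hMe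
    rw [hMe] at hABD
    set m0 : ℤ := k*a/c + 1 with hm0
    set m1 : ℤ := k*b/c + 1 with hm1
    set x : Fin 3 → ℝ := ![(m0:ℝ), (m1:ℝ), (k:ℝ)] with hxdef
    have i1 : a*k ≤ c*m0 := by
      have e : c*m0 - a*k = c - A := by rw [hm0]; linear_combination h1
      linarith
    have i2 : b*k ≤ c*m1 := by
      have e : c*m1 - b*k = c - B := by rw [hm1]; linear_combination h2
      linarith
    have i4 : c*m0 + c*m1 + (1-a-b)*k ≤ c := by
      have e : c*m0 + c*m1 + (1-a-b)*k = 2*c + k - A - B := by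
        rw [hm0, hm1]; linear_combination h1 + h2
      linarith
    have hxm : x ∈ Tet a b c := by
      rw [tet_mem_iff a b c hc0]
      refine ⟨?_, ?_, ?_, ?_⟩ <;> simp [hxdef]
      · exact_mod_cast i1
      · exact_mod_cast i2
      · exact_mod_cast (by omega : (0:ℤ) ≤ k)
      · exact_mod_cast i4
    have hlat : IsLatticePt x := by
      intro i
      fin_cases i
      exacts [⟨m0, by simp [hxdef]⟩, ⟨m1, by simp [hxdef]⟩, ⟨k, by simp [hxdef]⟩]
    rcases hEmpty x hxm hlat with h | h | h | h <;>
      · have h2' := congrFun h 2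
        simp [hxdef] at h2'
        omega
  -- rule out M = 0
  have hMne0 : M ≠ 0 := by
    intro hMe
    rw [hMe, mul_zero, add_zero] at hABD
    set m0 : ℤ := a - k*a/c with hm0
    set m1 : ℤ := b - k*b/c with hm1
    set x : Fin 3 → ℝ := ![(m0:ℝ), (m1:ℝ), ((c - k : ℤ):ℝ)] with hxdef
    have i1 : a*(c-k) ≤ c*m0 := by
      have e : c*m0 - a*(c-k) = A := by rw [hm0]; linear_combination (-1:ℤ) * h1
      linarith
    have i2 : b*(c-k) ≤ c*m1 := by
      have e : c*m1 - b*(c-k) = B := by rw [hm1]; linear_combination (-1:ℤ) * h2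
      linarith
    have i4 : c*m0 + c*m1 + (1-a-b)*(c-k) ≤ c := by
      have e : c*m0 + c*m1 + (1-a-b)*(c-k) = A + B + c - k := by
        rw [hm0, hm1]; linear_combination (-1:ℤ)*h1 - h2
      linarith
    have hxm : x ∈ Tet a b c := by
      rw [tet_mem_iff a b c hc0]
      refine ⟨?_, ?_, ?_, ?_⟩ <;> simp [hxdef]
      · exact_mod_cast i1
      · exact_mod_cast i2
      · exact_mod_cast (by omega : k ≤ c)
      · exact_mod_cast i4
    have hlat : IsLatticePt x := by
      intro i
      fin_cases i
      exacts [⟨m0, by simp [hxdef]⟩, ⟨m1, by simp [hxdef]⟩, ⟨c - k, by simp [hxdef]⟩]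
    rcases hEmpty x hxm hlat with h | h | h | h <;>
      · have h2' := congrFun h 2
        simp [hxdef] at h2'
        first
        | omega
        | (have h3' : c - k = 0 := by exact_mod_cast h2'
           omega)
        | (have h3' : c - k = c := by exact_mod_cast h2'
           omega)
  have hM1 : M = 1 := by omega
  rw [hM1, mul_one] at hABD
  rw [my_fract_eq _ _ hc0, my_fract_eq _ _ hc0, my_fract_eq _ _ hc0]
  rw [← hA, ← hB, ← hD]
  have hcast : (A:ℝ) + B + D = k + c := by exact_mod_cast hABD
  field_simp
  linarith

lemma tet_backward (a b c d : ℤ) (hc : 1 < c) (ha : 0 ≤ a) (hac : a < c) (hb : 0 ≤ b)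
    (hbc : b < c) (hd : d = (1 - a - b) % c)
    (hclean : ∀ x ∈ frontier (Tet a b c), IsLatticePt x →
      x = ![0,0,0] ∨ x = ![1,0,0] ∨ x = ![0,1,0] ∨ x = ![(a : ℝ), (b : ℝ), (c : ℝ)])
    (hcond : ∀ k : ℤ, 1 ≤ k → k ≤ c - 1 →
        Int.fract ((k * a : ℤ) / (c : ℝ)) + Int.fract ((k * b : ℤ) / (c : ℝ)) +
            Int.fract ((k * d : ℤ) / (c : ℝ)) - (k : ℝ) / (c : ℝ) = 1)
    (x : Fin 3 → ℝ) (hx : x ∈ Tet a b c) (hlat : IsLatticePt x) :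
    x = ![0,0,0] ∨ x = ![1,0,0] ∨ x = ![0,1,0] ∨ x = ![(a : ℝ), (b : ℝ), (c : ℝ)] := by
  have hc0 : (0:ℤ) < c := by omega
  have hc' : (0:ℝ) < c := by exact_mod_cast hc0
  by_cases hint : x ∈ interior (Tet a b c)
  · exfalso
    obtain ⟨m0, e0⟩ := hlat 0
    obtain ⟨m1, e1⟩ := hlat 1
    obtain ⟨m2, e2⟩ := hlat 2
    obtain ⟨s1, s2, s3, s4⟩ := interior_strict a b c hc0 x hint
    rw [e0, e2] at s1
    rw [e1, e2] at s2
    rw [e2] at s3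
    rw [e0, e1, e2] at s4
    have t1 : a * m2 < c * m0 := by exact_mod_cast (by linarith : (a:ℝ) * m2 < c * m0)
    have t2 : b * m2 < c * m1 := by exact_mod_cast (by linarith : (b:ℝ) * m2 < c * m1)
    have t3 : 0 < m2 := by exact_mod_cast s3
    have t4 : c * m0 + c * m1 + (1 - a - b) * m2 < c := by exact_mod_cast s4
    set k := m2 with hk
    have hkc : k < c := by nlinarith
    have heq := hcond k t3 (by omega)
    rw [my_fract_eq _ _ hc0, my_fract_eq _ _ hc0, my_fract_eq _ _ hc0] at heq
    set A := k * a % c with hA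
    set B := k * b % c with hB
    set D := k * d % c with hD
    have hA0 : 0 ≤ A := Int.emod_nonneg _ (by omega)
    have hB0 : 0 ≤ B := Int.emod_nonneg _ (by omega)
    have hD0 : 0 ≤ D := Int.emod_nonneg _ (by omega)
    have hABD : A + B + D = k + c := by
      have : (A:ℝ) + B + D - k = c := by
        field_simp at heq
        linarith
      exact_mod_cast (by linarith : (A:ℝ) + B + D = k + c)
    have h1 := Int.mul_ediv_add_emod (k*a) c
    have h2 := Int.mul_ediv_add_emod (k*b) c
    rw [← hA] at h1
    rw [← hB] at h2
    -- t1' : c - A ≤ c * m0 - a * k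
    have hs1 : 0 < m0 - k*a/c := by
      by_contra hcon
      push_neg at hcon
      have : c * (m0 - k*a/c) ≤ c * 0 := mul_le_mul_of_nonneg_left hcon hc0.le
      nlinarith [this]
    have hq1 : c - A ≤ c * m0 - a * k := by
      have e : c * m0 - a * k = c * (m0 - k*a/c) - A := by linear_combination h1
      have : c * 1 ≤ c * (m0 - k*a/c) := mul_le_mul_of_nonneg_left (by omega) hc0.le
      linarith
    have hs2 : 0 < m1 - k*b/c := by
      by_contra hcon
      push_neg at hcon
      have : c * (m1 - k*b/c) ≤ c * 0 := mul_le_mul_of_nonneg_left hcon hc0.le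
      nlinarith [this]
    have hq2 : c - B ≤ c * m1 - b * k := by
      have e : c * m1 - b * k = c * (m1 - k*b/c) - B := by linear_combination h2
      have : c * 1 ≤ c * (m1 - k*b/c) := mul_le_mul_of_nonneg_left (by omega) hc0.le
      linarith
    -- now contradiction
    have : c * m0 + c * m1 + (1 - a - b) * k = (c*m0 - a*k) + (c*m1 - b*k) + k := by ring
    linarith [hq1, hq2, t4, hABD, hD0, this]
  · have hfr : x ∈ frontier (Tet a b c) := by
      rw [(tet_closed a b c).frontier_eq]
      exact ⟨hx, hint⟩
    exact hclean x hfr hlat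

/-- Let `c > 1`, `0 ≤ a, b < c`, `d = (1 - a - b) mod c`, and suppose `T_{a,b,c}` is a
clean lattice tetrahedron. Then `T_{a,b,c}` is empty if and only if
`⟨ka/c⟩ + ⟨kb/c⟩ + ⟨kd/c⟩ - k/c = 1` for every integer `k` with `1 ≤ k ≤ c - 1`, where
`⟨x⟩` denotes the fractional part. -/
theorem stmt_10 (a b c d : ℤ) (hc : 1 < c) (ha : 0 ≤ a) (hac : a < c) (hb : 0 ≤ b)
    (hbc : b < c) (hd : d = (1 - a - b) % c) (hclean : TetIsClean a b c) :
    TetIsEmpty a b c ↔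
      ∀ k : ℤ, 1 ≤ k → k ≤ c - 1 →
        Int.fract ((k * a : ℤ) / (c : ℝ)) + Int.fract ((k * b : ℤ) / (c : ℝ)) +
            Int.fract ((k * d : ℤ) / (c : ℝ)) - (k : ℝ) / (c : ℝ) = 1 := by
  constructor
  · intro hEmpty k hk1 hk2
    exact tet_forward a b c d hc ha hac hb hbc hd hEmpty k hk1 hk2
  · intro hcond x hx hlat
    exact tet_backward a b c d hc ha hac hb hbc hd hclean hcond x hx hlat
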